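/- Let A ∈ ℝ^{n×m} with largest singular value σ > 0, and let the EG step sizes satisfy α = γ < 1/(2σ). Then: (i) if n = m and A is invertible, every (complex) eigenvalue of M_EG(A) has modulus strictly less than 1; (ii) if A has a zero singular value (in particular whenever A is not an invertible square matrix), then 1 is an eigenvalue of M_EG(A) and every eigenvalue of M_EG(A) other than 1 has modulus strictly less than 1. -/

import Mathlib

open Matrix Filter

/-- Spectral (operator 2-)norm of a real matrix; this is also its largest singular value. -/
noncomputable def mnorm2 {ι κ : Type*} [Fintype ι] [Fintype κ] [DecidableEq κ]
    (M : Matrix ι κ ℝ) : ℝ :=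
  ‖LinearMap.toContinuousLinearMap (Matrix.toEuclideanLin M)‖

/-- The extra-gradient (EG) iterative matrix
`M_EG(A) = [[I − αγ A Aᵀ, −α A], [α Aᵀ, I − αγ Aᵀ A]]`. -/
noncomputable def MEG {n m : ℕ} (α γ : ℝ) (A : Matrix (Fin n) (Fin m) ℝ) :
    Matrix (Fin n ⊕ Fin m) (Fin n ⊕ Fin m) ℝ :=
  fromBlocks (1 - (α * γ) • (A * Aᵀ)) ((-α) • A) (α • Aᵀ) (1 - (α * γ) • (Aᵀ * A))

/-- `μ : ℂ` is an eigenvalue of the real matrix `M`. -/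
def IsEig {d : Type*} [Fintype d] (M : Matrix d d ℝ) (μ : ℂ) : Prop :=
  ∃ v : d → ℂ, v ≠ 0 ∧ (M.map (fun x : ℝ => (x : ℂ))).mulVec v = μ • v

lemma dot_eq_normsq {ι : Type*} [Fintype ι] (x : ι → ℝ) :
    x ⬝ᵥ x = ‖(WithLp.equiv 2 (ι → ℝ)).symm x‖^2 := by
  rw [← real_inner_self_eq_norm_sq]
  rw [PiLp.inner_apply]; simp [dotProduct, sq]

lemma spec_bound {ι κ : Type*} [Fintype ι] [Fintype κ] [DecidableEq κ]
    (M : Matrix ι κ ℝ) (y : κ → ℝ) :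
    (M *ᵥ y) ⬝ᵥ (M *ᵥ y) ≤ (mnorm2 M)^2 * (y ⬝ᵥ y) := by
  rw [dot_eq_normsq, dot_eq_normsq]
  have h := (LinearMap.toContinuousLinearMap (Matrix.toEuclideanLin M)).le_opNorm
      ((WithLp.equiv 2 (κ → ℝ)).symm y)
  have he : (LinearMap.toContinuousLinearMap (Matrix.toEuclideanLin M))
      ((WithLp.equiv 2 (κ → ℝ)).symm y) = (WithLp.equiv 2 (ι → ℝ)).symm (M *ᵥ y) := by
    simp [LinearMap.toContinuousLinearMap]
  rw [he] at h
  have := pow_le_pow_left₀ (norm_nonneg _) h 2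
  rw [mul_pow] at this
  exact this

lemma spec_bound_T {ι κ : Type*} [Fintype ι] [Fintype κ] [DecidableEq κ]
    (M : Matrix ι κ ℝ) (x : ι → ℝ) :
    (Mᵀ *ᵥ x) ⬝ᵥ (Mᵀ *ᵥ x) ≤ (mnorm2 M)^2 * (x ⬝ᵥ x) := by
  have key : (Mᵀ *ᵥ x) ⬝ᵥ (Mᵀ *ᵥ x) = x ⬝ᵥ (M *ᵥ (Mᵀ *ᵥ x)) := by
    conv_rhs => rw [dotProduct_mulVec, ← mulVec_transpose]
  have cs : x ⬝ᵥ (M *ᵥ (Mᵀ *ᵥ x)) ≤ ‖(WithLp.equiv 2 (ι → ℝ)).symm x‖ *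
      ‖(WithLp.equiv 2 (ι → ℝ)).symm (M *ᵥ (Mᵀ *ᵥ x))‖ := by
    have h2 : x ⬝ᵥ (M *ᵥ (Mᵀ *ᵥ x)) = @inner ℝ _ _ ((WithLp.equiv 2 (ι → ℝ)).symm x)
        ((WithLp.equiv 2 (ι → ℝ)).symm (M *ᵥ (Mᵀ *ᵥ x))) := by
      simp [dotProduct, PiLp.inner_apply, mul_comm]
    rw [h2]
    exact real_inner_le_norm _ _
  have hMu : ‖(WithLp.equiv 2 (ι → ℝ)).symm (M *ᵥ (Mᵀ *ᵥ x))‖ ≤ mnorm2 M *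
      ‖(WithLp.equiv 2 (κ → ℝ)).symm (Mᵀ *ᵥ x)‖ := by
    have h := (LinearMap.toContinuousLinearMap (Matrix.toEuclideanLin M)).le_opNorm
        ((WithLp.equiv 2 (κ → ℝ)).symm (Mᵀ *ᵥ x))
    have he : (LinearMap.toContinuousLinearMap (Matrix.toEuclideanLin M))
        ((WithLp.equiv 2 (κ → ℝ)).symm (Mᵀ *ᵥ x)) =
        (WithLp.equiv 2 (ι → ℝ)).symm (M *ᵥ (Mᵀ *ᵥ x)) := by
      simp [LinearMap.toContinuousLinearMap]
    rwa [he] at h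
  have hx : x ⬝ᵥ x = ‖(WithLp.equiv 2 (ι → ℝ)).symm x‖^2 := dot_eq_normsq x
  have huu : (Mᵀ *ᵥ x) ⬝ᵥ (Mᵀ *ᵥ x) = ‖(WithLp.equiv 2 (κ → ℝ)).symm (Mᵀ *ᵥ x)‖^2 :=
    dot_eq_normsq _
  set a := ‖(WithLp.equiv 2 (κ → ℝ)).symm (Mᵀ *ᵥ x)‖ with ha'
  set b := ‖(WithLp.equiv 2 (ι → ℝ)).symm x‖ with hb'
  have ha : 0 ≤ a := norm_nonneg _
  have hb : 0 ≤ b := norm_nonneg _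
  have hs : 0 ≤ mnorm2 M := norm_nonneg _
  have h1 : a^2 ≤ b * (mnorm2 M * a) := by
    rw [← huu, key]
    exact cs.trans (mul_le_mul_of_nonneg_left hMu hb)
  rw [huu, hx]
  nlinarith [sq_nonneg (mnorm2 M * b - a)]

noncomputable def cmap {ι κ : Type*} (M : Matrix ι κ ℝ) : Matrix ι κ ℂ :=
  M.map (fun x : ℝ => (x : ℂ))

lemma re_mulVec {ι κ : Type*} [Fintype κ] (M : Matrix ι κ ℝ) (y : κ → ℂ) :
    (fun i => ((cmap M *ᵥ y) i).re) = M *ᵥ (fun j => (y j).re) := by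
  funext i
  simp [cmap, mulVec, dotProduct, Complex.re_sum, Complex.mul_re]

lemma im_mulVec {ι κ : Type*} [Fintype κ] (M : Matrix ι κ ℝ) (y : κ → ℂ) :
    (fun i => ((cmap M *ᵥ y) i).im) = M *ᵥ (fun j => (y j).im) := by
  funext i
  simp [cmap, mulVec, dotProduct, Complex.im_sum, Complex.mul_im]

lemma dot_star_self_re {ι : Type*} [Fintype ι] (w : ι → ℂ) :
    (star w ⬝ᵥ w).re = (fun i => (w i).re) ⬝ᵥ (fun i => (w i).re)
      + (fun i => (w i).im) ⬝ᵥ (fun i => (w i).im) := by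
  simp [dotProduct, Complex.re_sum, Pi.star_apply, Complex.mul_re, ← Finset.sum_add_distrib]

lemma cspec {ι κ : Type*} [Fintype ι] [Fintype κ] [DecidableEq κ]
    (M : Matrix ι κ ℝ) (y : κ → ℂ) :
    (star (cmap M *ᵥ y) ⬝ᵥ (cmap M *ᵥ y)).re ≤ (mnorm2 M)^2 * (star y ⬝ᵥ y).re := by
  rw [dot_star_self_re, dot_star_self_re, re_mulVec, im_mulVec, mul_add]
  exact add_le_add (spec_bound M _) (spec_bound M _)

lemma cspec_T {ι κ : Type*} [Fintype ι] [Fintype κ] [DecidableEq κ]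
    (M : Matrix ι κ ℝ) (x : ι → ℂ) :
    (star ((cmap M)ᵀ *ᵥ x) ⬝ᵥ ((cmap M)ᵀ *ᵥ x)).re ≤ (mnorm2 M)^2 * (star x ⬝ᵥ x).re := by
  have h : (cmap M)ᵀ = cmap Mᵀ := by simp [cmap, Matrix.transpose_map]
  rw [h, dot_star_self_re, dot_star_self_re, re_mulVec, im_mulVec, mul_add]
  exact add_le_add (spec_bound_T M _) (spec_bound_T M _)

noncomputable def CC {n m : ℕ} (A : Matrix (Fin n) (Fin m) ℝ) :
    Matrix (Fin n ⊕ Fin m) (Fin n ⊕ Fin m) ℂ :=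
  fromBlocks 0 (-(cmap A)) (cmap A)ᵀ 0

lemma CC_skew {n m : ℕ} (A : Matrix (Fin n) (Fin m) ℝ) (u z : Fin n ⊕ Fin m → ℂ) :
    star (CC A *ᵥ u) ⬝ᵥ z = -(star u ⬝ᵥ (CC A *ᵥ z)) := by
  have hH : (CC A)ᴴ = -(CC A) := by
    have h1 : (cmap A)ᴴ = (cmap A)ᵀ := by
      ext i j; simp [cmap, Matrix.conjTranspose_apply]
    have h2 : ((cmap A)ᵀ)ᴴ = cmap A := by
      ext i j; simp [cmap, Matrix.conjTranspose_apply]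
    simp [CC, Matrix.fromBlocks_conjTranspose, h1, h2, Matrix.fromBlocks_neg]
  rw [star_mulVec, hH]
  rw [← dotProduct_mulVec]
  simp [Matrix.neg_mulVec]

lemma MEG_decomp {n m : ℕ} (α : ℝ) (A : Matrix (Fin n) (Fin m) ℝ) :
    cmap (MEG α α A) = 1 + (α : ℂ) • CC A + ((α : ℂ)^2) • (CC A * CC A) := by
  have hCC : CC A * CC A =
      fromBlocks (-(cmap A * (cmap A)ᵀ)) 0 0 (-((cmap A)ᵀ * cmap A)) := by
    simp [CC, Matrix.fromBlocks_multiply, Matrix.mul_neg, Matrix.neg_mul]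
  rw [hCC]
  ext i j
  rcases i with i | i <;> rcases j with j | j <;>
    simp [MEG, cmap, CC, Matrix.fromBlocks, Matrix.one_apply, Matrix.mul_apply,
      Matrix.transpose_apply, Matrix.map_apply, apply_ite, Complex.ofReal_sum] <;>
    push_cast <;> split_ifs <;> ring

lemma star_sum_elim {n m : ℕ} (a : Fin n → ℂ) (b : Fin m → ℂ) :
    star (Sum.elim a b) = Sum.elim (star a) (star b) := by
  funext i; cases i <;> rfl

lemma star_dot {ι : Type*} [Fintype ι] (u z : ι → ℂ) :
    star (star u ⬝ᵥ z) = star z ⬝ᵥ u := by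
  rw [dotProduct, dotProduct, star_sum]
  exact Finset.sum_congr rfl fun i _ => by
    simp [Complex.star_def, mul_comm]

open scoped ComplexOrder in
set_option maxHeartbeats 1000000 in
lemma core {n m : ℕ} {α : ℝ} (hα : 0 < α) (A : Matrix (Fin n) (Fin m) ℝ)
    (hσ : 0 < mnorm2 A) (hlt : α < 1 / (2 * mnorm2 A)) (μ : ℂ)
    (v : Fin n ⊕ Fin m → ℂ) (hv : v ≠ 0)
    (heig : cmap (MEG α α A) *ᵥ v = μ • v) :
    ‖μ‖ < 1 ∨ (μ = 1 ∧ CC A *ᵥ v = 0) := by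
  obtain ⟨w, hw⟩ : ∃ w, w = CC A *ᵥ v := ⟨_, rfl⟩
  obtain ⟨N, hN⟩ : ∃ N, N = star v ⬝ᵥ v := ⟨_, rfl⟩
  obtain ⟨c, hc⟩ : ∃ c, c = star v ⬝ᵥ w := ⟨_, rfl⟩
  obtain ⟨t, ht⟩ : ∃ t, t = star w ⬝ᵥ w := ⟨_, rfl⟩
  obtain ⟨c₂, hc₂⟩ : ∃ c₂, c₂ = star w ⬝ᵥ (CC A *ᵥ w) := ⟨_, rfl⟩
  -- eigen equation in C-form
  have hE : v + (α : ℂ) • w + (α : ℂ)^2 • (CC A *ᵥ w) = μ • v := by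
    rw [hw]
    rw [MEG_decomp] at heig
    rw [Matrix.add_mulVec, Matrix.add_mulVec, Matrix.one_mulVec,
      Matrix.smul_mulVec, Matrix.smul_mulVec, ← Matrix.mulVec_mulVec] at heig
    exact heig
  -- dot with star v
  have hsvw : star v ⬝ᵥ (CC A *ᵥ w) = -t := by
    have h := CC_skew A v w
    rw [← hw, ← ht] at h
    linear_combination h
  have e1 : N + (α : ℂ) * c - (α : ℂ)^2 * t = μ * N := by
    have h := congrArg (fun z => star v ⬝ᵥ z) hE
    simp only [dotProduct_add, dotProduct_smul, smul_eq_mul, hsvw] at h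
    rw [← hN, ← hc] at h
    linear_combination h
  -- dot with star w
  have hwv : star w ⬝ᵥ v = -c := by
    have h := CC_skew A v v
    rw [← hw, ← hc] at h
    exact h
  have e2 : -c + (α : ℂ) * t + (α : ℂ)^2 * c₂ = -(μ * c) := by
    have h := congrArg (fun z => star w ⬝ᵥ z) hE
    simp only [dotProduct_add, dotProduct_smul, smul_eq_mul, hwv] at h
    rw [← ht, ← hc₂] at h
    linear_combination h
  -- star facts
  have hNs : star N = N := by rw [hN, star_dot]
  have hts : star t = t := by rw [ht, star_dot]
  have hcs : star c = -c := by rw [hc, star_dot, ← hc]; exact hwv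
  have hc2s : star c₂ = -c₂ := by
    rw [hc₂, star_dot]
    have h := CC_skew A w w
    rw [← hc₂] at h
    rw [← hc₂]
    exact h
  have hαs : star ((α : ℂ)) = (α : ℂ) := Complex.conj_ofReal α
  -- starred equations
  have se1 : N - (α : ℂ) * c - (α : ℂ)^2 * t = star μ * N := by
    have h := congrArg star e1
    simp only [star_sub, star_add, star_mul', star_pow, hNs, hts, hcs, hαs] at h
    linear_combination h
  have se2 : c + (α : ℂ) * t - (α : ℂ)^2 * c₂ = star μ * c := by
    have h := congrArg star e2
    simp only [star_sub, star_add, star_mul', star_neg, star_pow, hts, hcs, hc2s, hαs] at h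
    linear_combination h
  have hre : (μ + star μ) * N = 2 * N - 2 * (α : ℂ)^2 * t := by linear_combination -e1 - se1
  have hcN : 2 * (α : ℂ) * c = (μ - star μ) * N := by linear_combination e1 - se1
  have him : 2 * (α : ℂ) * t = (star μ - μ) * c := by linear_combination e2 + se2
  have key2 : 4 * (α : ℂ)^2 * t = -(μ - star μ)^2 * N := by
    linear_combination 2 * (α : ℂ) * him + (star μ - μ) * hcN
  -- N and t are nonnegative reals
  have hN0 : 0 ≤ N := by rw [hN]; exact dotProduct_star_self_nonneg v
  have hNne : N ≠ 0 := by
    rw [hN]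
    intro h0
    exact hv (dotProduct_star_self_eq_zero.mp h0)
  have hNim : N.im = 0 := by
    have := (Complex.le_def.mp hN0).2; simpa using this.symm
  have hNre : 0 < N.re := by
    rcases lt_or_eq_of_le (Complex.le_def.mp hN0).1 with h | h
    · simpa using h
    · exfalso; exact hNne (Complex.ext (by simpa using h.symm) hNim)
  have ht0 : 0 ≤ t := by rw [ht]; exact dotProduct_star_self_nonneg w
  have htim : t.im = 0 := by
    have := (Complex.le_def.mp ht0).2; simpa using this.symm
  have htre : 0 ≤ t.re := by simpa using (Complex.le_def.mp ht0).1
  -- real equations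
  have R1 : 2 * μ.re * N.re = 2 * N.re - 2 * α^2 * t.re := by
    have hre2 : ((2 * μ.re : ℝ) : ℂ) * N = ((2:ℝ) : ℂ) * N - ((2 * α^2 : ℝ) : ℂ) * t := by
      rw [Complex.star_def] at hre
      rw [Complex.add_conj] at hre
      push_cast
      push_cast at hre
      linear_combination hre
    have h := congrArg Complex.re hre2
    simp only [Complex.mul_re, Complex.sub_re, Complex.ofReal_re, Complex.ofReal_im,
      hNim, htim] at h
    linarith [h]
  have R2 : α^2 * t.re = μ.im^2 * N.re := by
    have key2' : ((4 * α^2 : ℝ) : ℂ) * t = (((2 * μ.im)^2 : ℝ) : ℂ) * N := by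
      rw [Complex.star_def, Complex.sub_conj] at key2
      push_cast
      push_cast at key2
      linear_combination key2 - (2 * (μ.im : ℂ))^2 * N * Complex.I_sq
    have h := congrArg Complex.re key2'
    simp only [Complex.mul_re, Complex.ofReal_re, Complex.ofReal_im, hNim, htim] at h
    nlinarith [h]
  -- spectral bound : t.re ≤ σ² N.re
  have hv' : Sum.elim (v ∘ Sum.inl) (v ∘ Sum.inr) = v := Sum.elim_comp_inl_inr v
  have hwsplit : w = Sum.elim (-(cmap A *ᵥ (v ∘ Sum.inr))) ((cmap A)ᵀ *ᵥ (v ∘ Sum.inl)) := by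
    rw [hw, CC, Matrix.fromBlocks_mulVec]
    simp [Matrix.neg_mulVec, Matrix.zero_mulVec]
  have htsplit : t.re = (star (cmap A *ᵥ (v ∘ Sum.inr)) ⬝ᵥ (cmap A *ᵥ (v ∘ Sum.inr))).re
      + (star ((cmap A)ᵀ *ᵥ (v ∘ Sum.inl)) ⬝ᵥ ((cmap A)ᵀ *ᵥ (v ∘ Sum.inl))).re := by
    rw [ht, hwsplit, star_sum_elim, sumElim_dotProduct_sumElim, Complex.add_re]
    simp
  have hNsplit : N.re = (star (v ∘ Sum.inl) ⬝ᵥ (v ∘ Sum.inl)).re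
      + (star (v ∘ Sum.inr) ⬝ᵥ (v ∘ Sum.inr)).re := by
    conv_lhs => rw [hN, ← hv']
    rw [star_sum_elim, sumElim_dotProduct_sumElim, Complex.add_re]
  have hb : t.re ≤ (mnorm2 A)^2 * N.re := by
    have h1 := cspec A (v ∘ Sum.inr)
    have h2 := cspec_T A (v ∘ Sum.inl)
    rw [hNsplit, mul_add]
    linarith [htsplit]
  have hhalf : α * mnorm2 A < 1/2 := by
    rw [lt_div_iff₀ (by positivity)] at hlt
    nlinarith
  have h4 : (α * mnorm2 A)^2 < 1/4 := by nlinarith [mul_pos hα hσ]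
  have haP : α^2 * t.re < N.re := by
    nlinarith [mul_le_mul_of_nonneg_left hb (sq_nonneg α), hNre, h4]
  -- case split on t.re
  rcases eq_or_lt_of_le htre with h0 | hpos
  · right
    have ht0' : t = 0 := by
      apply Complex.ext
      · simpa using h0.symm
      · simpa using htim
    have hw0 : w = 0 := by
      rw [ht] at ht0'
      exact dotProduct_star_self_eq_zero.mp ht0'
    have hre1 : μ.re = 1 := by
      have h1 : (2 * μ.re - 2) * N.re = 0 := by linear_combination R1 + 2 * α^2 * h0
      rcases mul_eq_zero.mp h1 with h | h
      · linarith
      · exact absurd h hNre.ne'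
    have him1 : μ.im = 0 := by
      have h1 : μ.im^2 * N.re = 0 := by linear_combination -R2 - α^2 * h0
      rcases mul_eq_zero.mp h1 with h | h
      · exact pow_eq_zero_iff (by norm_num) |>.mp h
      · exact absurd h hNre.ne'
    refine ⟨?_, ?_⟩
    · apply Complex.ext <;> simp [hre1, him1]
    · rw [← hw]; exact hw0
  · left
    have hapos : 0 < α^2 * t.re := by positivity
    have hre' : μ.re * N.re = N.re - α^2 * t.re := by linarith
    have him' : μ.im^2 * N.re = α^2 * t.re := by linarith [R2]
    have sq1 : (μ.re * N.re)^2 = (N.re - α^2 * t.re)^2 := by rw [hre']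
    have sq2 : μ.im^2 * N.re * N.re = (α^2 * t.re) * N.re := by rw [him']
    have habs : (‖μ‖)^2 = μ.re^2 + μ.im^2 := by
      rw [Complex.sq_norm, Complex.normSq_apply]; ring
    have h1 : (‖μ‖)^2 < 1 := by
      rw [habs]
      nlinarith [sq1, sq2, mul_pos hNre hNre, mul_pos hapos (sub_pos.mpr haP)]
    exact lt_of_pow_lt_pow_left₀ 2 zero_le_one (by rw [one_pow]; exact h1)

lemma cmap_mulVec {ι κ : Type*} [Fintype κ] (M : Matrix ι κ ℝ) (y : κ → ℝ) :
    cmap M *ᵥ (fun j => ((y j : ℝ) : ℂ)) = fun i => (((M *ᵥ y) i : ℝ) : ℂ) := by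
  funext i
  simp [cmap, mulVec, dotProduct]

lemma CC_mulVec {n m : ℕ} (A : Matrix (Fin n) (Fin m) ℝ) (v : Fin n ⊕ Fin m → ℂ) :
    CC A *ᵥ v = Sum.elim (-(cmap A *ᵥ (v ∘ Sum.inr))) ((cmap A)ᵀ *ᵥ (v ∘ Sum.inl)) := by
  rw [CC, Matrix.fromBlocks_mulVec]
  simp [Matrix.neg_mulVec, Matrix.zero_mulVec]

/-- With EG step sizes `α = γ < 1/(2σ)`, `σ = ‖A‖₂ > 0` the largest singular value:
(i) if `A` is an invertible square matrix, every complex eigenvalue of `M_EG(A)` has modulus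
`< 1`; (ii) if `A` has a zero singular value (i.e. `A` or `Aᵀ` has a nontrivial kernel, which
is the case whenever `A` is not an invertible square matrix), then `1` is an eigenvalue of
`M_EG(A)` and all other eigenvalues have modulus `< 1`. -/
theorem stmt7 (α γ : ℝ) (hα : 0 < α) (hαγ : α = γ) :
    (∀ (n : ℕ) (A : Matrix (Fin n) (Fin n) ℝ), 0 < mnorm2 A →
      α < 1 / (2 * mnorm2 A) → IsUnit A.det →
      ∀ μ : ℂ, IsEig (MEG α γ A) μ → ‖μ‖ < 1) ∧
    (∀ (n m : ℕ) (A : Matrix (Fin n) (Fin m) ℝ), 0 < mnorm2 A →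
      α < 1 / (2 * mnorm2 A) →
      ((∃ y : Fin m → ℝ, y ≠ 0 ∧ A.mulVec y = 0) ∨
        (∃ x : Fin n → ℝ, x ≠ 0 ∧ Aᵀ.mulVec x = 0)) →
      IsEig (MEG α γ A) 1 ∧
        ∀ μ : ℂ, IsEig (MEG α γ A) μ → μ ≠ 1 → ‖μ‖ < 1) := by
  subst hαγ
  constructor
  · intro n A hσ hlt hdet μ hEig
    obtain ⟨v, hv, heig⟩ := hEig
    rcases core hα A hσ hlt μ v hv heig with h | ⟨h1, h2⟩
    · exact h
    · exfalso
      rw [CC_mulVec] at h2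
      have hAdet : (cmap A).det ≠ 0 := by
        have hd : (cmap A).det = ((A.det : ℝ) : ℂ) :=
          (RingHom.map_det Complex.ofRealHom A).symm
        rw [hd]
        exact_mod_cast isUnit_iff_ne_zero.mp hdet
      have hinr : cmap A *ᵥ (v ∘ Sum.inr) = 0 := by
        have := congrFun h2
        have h3 : -(cmap A *ᵥ (v ∘ Sum.inr)) = 0 := by
          funext i; simpa using this (Sum.inl i)
        simpa [neg_eq_zero] using h3
      have hinl : (cmap A)ᵀ *ᵥ (v ∘ Sum.inl) = 0 := by
        funext i; simpa using congrFun h2 (Sum.inr i)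
      have hy0 : v ∘ Sum.inr = 0 := Matrix.eq_zero_of_mulVec_eq_zero hAdet hinr
      have hx0 : v ∘ Sum.inl = 0 := by
        refine Matrix.eq_zero_of_mulVec_eq_zero ?_ hinl
        rwa [Matrix.det_transpose]
      apply hv
      funext i
      cases i with
      | inl i => exact congrFun hx0 i
      | inr i => exact congrFun hy0 i
  · intro n m A hσ hlt hker
    constructor
    · rcases hker with ⟨y, hy0, hAy⟩ | ⟨x, hx0, hAx⟩
      · refine ⟨Sum.elim 0 (fun j => ((y j : ℝ) : ℂ)), ?_, ?_⟩
        · obtain ⟨j, hj⟩ := Function.ne_iff.mp hy0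
          intro h
          have := congrFun h (Sum.inr j)
          simp only [Sum.elim_inr, Pi.zero_apply, Complex.ofReal_eq_zero] at this
          exact hj (by simpa using this)
        · have h0 : CC A *ᵥ (Sum.elim 0 (fun j => ((y j : ℝ) : ℂ))) = 0 := by
            rw [CC_mulVec]
            have h1 : (Sum.elim (0 : Fin n → ℂ) (fun j => ((y j : ℝ) : ℂ))) ∘ Sum.inr
                = fun j => ((y j : ℝ) : ℂ) := rfl
            have h2 : (Sum.elim (0 : Fin n → ℂ) (fun j => ((y j : ℝ) : ℂ))) ∘ Sum.inl
                = 0 := rfl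
            rw [h1, h2, cmap_mulVec, hAy, Matrix.mulVec_zero]
            funext i
            cases i <;> simp
          show cmap (MEG α α A) *ᵥ _ = _
          rw [MEG_decomp, Matrix.add_mulVec, Matrix.add_mulVec, Matrix.one_mulVec,
            Matrix.smul_mulVec, Matrix.smul_mulVec, ← Matrix.mulVec_mulVec, h0]
          simp
      · refine ⟨Sum.elim (fun i => ((x i : ℝ) : ℂ)) 0, ?_, ?_⟩
        · obtain ⟨j, hj⟩ := Function.ne_iff.mp hx0
          intro h
          have := congrFun h (Sum.inl j)
          simp only [Sum.elim_inl, Pi.zero_apply, Complex.ofReal_eq_zero] at this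
          exact hj (by simpa using this)
        · have h0 : CC A *ᵥ (Sum.elim (fun i => ((x i : ℝ) : ℂ)) 0) = 0 := by
            rw [CC_mulVec]
            have h1 : (Sum.elim (fun i => ((x i : ℝ) : ℂ)) (0 : Fin m → ℂ)) ∘ Sum.inr
                = 0 := rfl
            have h2 : (Sum.elim (fun i => ((x i : ℝ) : ℂ)) (0 : Fin m → ℂ)) ∘ Sum.inl
                = fun i => ((x i : ℝ) : ℂ) := rfl
            have hT : (cmap A)ᵀ = cmap Aᵀ := by simp [cmap, Matrix.transpose_map]
            rw [h1, h2, hT, cmap_mulVec, hAx, Matrix.mulVec_zero]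
            funext i
            cases i <;> simp
          show cmap (MEG α α A) *ᵥ _ = _
          rw [MEG_decomp, Matrix.add_mulVec, Matrix.add_mulVec, Matrix.one_mulVec,
            Matrix.smul_mulVec, Matrix.smul_mulVec, ← Matrix.mulVec_mulVec, h0]
          simp
    · intro μ hEig hμ1
      obtain ⟨v, hv, heig⟩ := hEig
      rcases core hα A hσ hlt μ v hv heig with h | ⟨h1, h2⟩
      · exact h
      · exact absurd h1 hμ1
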